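/- Let H be a graph and let 𝓕_H be the family of bipartite clique quotients of H. Let Γ be a graph whose complement has chromatic number k, and let F be a bipartite graph on k vertices containing no member of 𝓕_H as a subgraph. Then Γ has a subgraph G with at least e(Γ)·e(F)/C(k,2) edges containing no induced copy of H. -/

import Mathlib

open scoped Classical
open Finset SimpleGraph


private lemma two_mul_choose_two (k : ℕ) : 2 * k.choose 2 = k * (k - 1) := by
  induction k with
  | zero => rfl
  | succ n ih =>
    rw [Nat.choose_succ_succ, Nat.choose_one_right, Nat.mul_add, ih]
    rcases n with _ | m
    · rfl
    · simp only [Nat.succ_sub_one]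
      ring

private lemma card_ordered_pairs {k : ℕ} (F : SimpleGraph (Fin k)) :
    #(Finset.univ.filter fun p : Fin k × Fin k => F.Adj p.1 p.2) = 2 * #F.edgeFinset := by
  rw [← F.dart_card_eq_twice_card_edges, ← Fintype.card_subtype]
  exact Fintype.card_congr
    ⟨fun p => ⟨p.1, p.2⟩, fun d => ⟨d.toProd, d.adj⟩,
      fun p => rfl, fun d => rfl⟩

private lemma perm_filter_card_congr {k : ℕ} (F : SimpleGraph (Fin k)) {i j i' j' : Fin k}
    (hij : i ≠ j) (hij' : i' ≠ j') :
    #(Finset.univ.filter fun σ : Equiv.Perm (Fin k) => F.Adj (σ i) (σ j)) =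
    #(Finset.univ.filter fun σ : Equiv.Perm (Fin k) => F.Adj (σ i') (σ j')) := by
  set τ₁ := Equiv.swap i i' with hτ₁
  set τ₂ := Equiv.swap (τ₁ j) j' with hτ₂
  set τ : Equiv.Perm (Fin k) := τ₂ * τ₁ with hτ
  have h1 : τ₁ i = i' := Equiv.swap_apply_left i i'
  have h2 : τ₁ j ≠ i' := fun h => hij (τ₁.injective (h.trans h1.symm)).symm
  have hτi : τ i = i' := by
    rw [hτ, Equiv.Perm.mul_apply, h1, hτ₂]
    exact Equiv.swap_apply_of_ne_of_ne (Ne.symm h2) hij'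
  have hτj : τ j = j' := by
    rw [hτ, Equiv.Perm.mul_apply, hτ₂]
    exact Equiv.swap_apply_left _ _
  have hτi' : τ⁻¹ i' = i := by rw [← hτi]; simp
  have hτj' : τ⁻¹ j' = j := by rw [← hτj]; simp
  refine Finset.card_equiv (Equiv.mulRight τ⁻¹) fun σ => ?_
  simp only [Finset.mem_filter, Finset.mem_univ, true_and, Equiv.coe_mulRight,
    Equiv.Perm.mul_apply, hτi', hτj']

private lemma perm_count {k : ℕ} (F : SimpleGraph (Fin k)) {i j : Fin k} (hij : i ≠ j) :
    #(Finset.univ.filter fun σ : Equiv.Perm (Fin k) => F.Adj (σ i) (σ j)) * k.choose 2 =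
    k.factorial * #F.edgeFinset := by
  set N := #(Finset.univ.filter fun σ : Equiv.Perm (Fin k) => F.Adj (σ i) (σ j)) with hN
  -- sum over all ordered pairs
  have hsum :
      ∑ p : Fin k × Fin k, #(Finset.univ.filter fun σ : Equiv.Perm (Fin k) => F.Adj (σ p.1) (σ p.2))
        = k.factorial * (2 * #F.edgeFinset) := by
    have h1 : ∀ σ : Equiv.Perm (Fin k),
        #(Finset.univ.filter fun p : Fin k × Fin k => F.Adj (σ p.1) (σ p.2))
          = 2 * #F.edgeFinset := by
      intro σ
      rw [← card_ordered_pairs F]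
      exact Finset.card_equiv (Equiv.prodCongr σ σ) (fun p => by
        simp [Equiv.prodCongr_apply])
    calc ∑ p : Fin k × Fin k,
          #(Finset.univ.filter fun σ : Equiv.Perm (Fin k) => F.Adj (σ p.1) (σ p.2))
        = ∑ p : Fin k × Fin k, ∑ σ : Equiv.Perm (Fin k), ite (F.Adj (σ p.1) (σ p.2)) 1 0 :=
          Finset.sum_congr rfl fun p _ => Finset.card_filter _ _
      _ = ∑ σ : Equiv.Perm (Fin k), ∑ p : Fin k × Fin k, ite (F.Adj (σ p.1) (σ p.2)) 1 0 :=
          Finset.sum_comm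
      _ = ∑ σ : Equiv.Perm (Fin k),
            #(Finset.univ.filter fun p : Fin k × Fin k => F.Adj (σ p.1) (σ p.2)) :=
          Finset.sum_congr rfl fun σ _ => (Finset.card_filter _ _).symm
      _ = ∑ _σ : Equiv.Perm (Fin k), 2 * #F.edgeFinset := by
          exact Finset.sum_congr rfl fun σ _ => h1 σ
      _ = k.factorial * (2 * #F.edgeFinset) := by
          rw [Finset.sum_const, smul_eq_mul, Finset.card_univ, Fintype.card_perm,
            Fintype.card_fin]
  -- restrict to off-diagonal
  have hsum2 :
      ∑ p : Fin k × Fin k, #(Finset.univ.filter fun σ : Equiv.Perm (Fin k) => F.Adj (σ p.1) (σ p.2))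
        = (k * k - k) * N := by
    have hdiag : ∀ p : Fin k × Fin k, p ∉ (Finset.univ : Finset (Fin k)).offDiag →
        #(Finset.univ.filter fun σ : Equiv.Perm (Fin k) => F.Adj (σ p.1) (σ p.2)) = 0 := by
      intro p hp
      have hpe : p.1 = p.2 := by
        by_contra h
        exact hp (Finset.mem_offDiag.mpr ⟨Finset.mem_univ _, Finset.mem_univ _, h⟩)
      rw [Finset.card_eq_zero, Finset.filter_eq_empty_iff]
      intro σ _
      rw [hpe]
      exact F.loopless.irrefl _
    rw [← Finset.sum_subset (Finset.subset_univ _) (fun p _ hp => hdiag p hp)]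
    have hconst : ∀ p ∈ (Finset.univ : Finset (Fin k)).offDiag,
        #(Finset.univ.filter fun σ : Equiv.Perm (Fin k) => F.Adj (σ p.1) (σ p.2)) = N := by
      intro p hp
      exact perm_filter_card_congr F (Finset.mem_offDiag.mp hp).2.2 hij
    rw [Finset.sum_congr rfl hconst, Finset.sum_const, smul_eq_mul, Finset.offDiag_card,
      Finset.card_univ, Fintype.card_fin]
  have hkk : k * k - k = k * (k - 1) := by
    rcases k with _ | m
    · rfl
    · simp only [Nat.succ_sub_one, Nat.mul_succ]
      omega
  have key : N * (2 * k.choose 2) = k.factorial * (2 * #F.edgeFinset) := by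
    rw [two_mul_choose_two, ← hkk, mul_comm, ← hsum2, hsum]
  have key2 : 2 * (N * k.choose 2) = 2 * (k.factorial * #F.edgeFinset) := by
    rw [← Nat.mul_left_comm, key, Nat.mul_left_comm]
  exact Nat.eq_of_mul_eq_mul_left (by norm_num) key2

private lemma edgeFinset_card_eq' {V : Type*} (G : SimpleGraph V) (i1 i2 : Fintype G.edgeSet) :
    (@SimpleGraph.edgeFinset V G i1).card = (@SimpleGraph.edgeFinset V G i2).card := by
  have h := Subsingleton.elim i1 i2
  subst h
  rfl

def IsCliqueQuotient {W : Type*} (H : SimpleGraph W) {k : ℕ} (Q : SimpleGraph (Fin k)) : Prop :=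
  ∃ g : W → Fin k, Function.Surjective g ∧
    (∀ a b, g a = g b → a ≠ b → H.Adj a b) ∧
    (∀ i j, Q.Adj i j ↔ i ≠ j ∧ ∃ a b, g a = i ∧ g b = j ∧ H.Adj a b)

theorem stmt_13 {V W : Type*} [Fintype V] [Fintype W] (Γ : SimpleGraph V)
    (H : SimpleGraph W) (k : ℕ)
    (hchi : Γᶜ.chromaticNumber = k)
    (F : SimpleGraph (Fin k)) (hFbip : F.Colorable 2)
    (hFfree : ∀ (kq : ℕ) (Q : SimpleGraph (Fin kq)), IsCliqueQuotient H Q → Q.Colorable 2 →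
      ¬ ∃ f : Q →g F, Function.Injective f) :
    ∃ G : SimpleGraph V, G ≤ Γ ∧
      (Γ.edgeFinset.card : ℝ) * F.edgeFinset.card / (k.choose 2) ≤ G.edgeFinset.card ∧
      IsEmpty (H ↪g G) := by
  obtain ⟨c⟩ : Γᶜ.Colorable k := chromaticNumber_le_iff_colorable.mp (le_of_eq hchi)
  -- the family of candidate subgraphs
  let Gs : Equiv.Perm (Fin k) → SimpleGraph V := fun σ =>
    { Adj := fun u v => Γ.Adj u v ∧ (c u = c v ∨ F.Adj (σ (c u)) (σ (c v)))
      symm := by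
        constructor
        rintro u v ⟨h1, h2⟩
        refine ⟨h1.symm, ?_⟩
        rcases h2 with h | h
        · exact Or.inl h.symm
        · exact Or.inr h.symm
      loopless := ⟨fun u h => Γ.loopless.irrefl u h.1⟩ }
  have hle : ∀ σ, Gs σ ≤ Γ := fun σ u v h => h.1
  -- no induced copy of H in any Gs σ
  have hfree : ∀ σ, IsEmpty (H ↪g Gs σ) := by
    intro σ
    constructor
    intro φ
    set g0 : W → Fin k := fun a => σ (c (φ a)) with hg0
    set S : Finset (Fin k) := Finset.image g0 Finset.univ with hS
    have hmem : ∀ a, g0 a ∈ S := fun a => Finset.mem_image_of_mem g0 (Finset.mem_univ a)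
    set e : {x // x ∈ S} ≃ Fin S.card := S.equivFin with he
    set g : W → Fin S.card := fun a => e ⟨g0 a, hmem a⟩ with hg
    have hg0eq : ∀ a b, g a = g b → g0 a = g0 b := by
      intro a b h
      have := e.injective h
      exact congrArg Subtype.val this
    let Q : SimpleGraph (Fin S.card) :=
      { Adj := fun i j => i ≠ j ∧ ∃ a b, g a = i ∧ g b = j ∧ H.Adj a b
        symm := by
          constructor
          rintro i j ⟨hne, a, b, ha, hb, hab⟩
          exact ⟨hne.symm, b, a, hb, ha, hab.symm⟩
        loopless := ⟨fun i h => h.1 rfl⟩ }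
    have hfib : ∀ a b, g a = g b → a ≠ b → H.Adj a b := by
      intro a b hgab hne
      have hc : c (φ a) = c (φ b) := σ.injective (hg0eq a b hgab)
      have hφ : φ a ≠ φ b := fun h => hne (φ.injective h)
      have hnadj : ¬ Γᶜ.Adj (φ a) (φ b) := fun h => c.valid h hc
      have hΓ : Γ.Adj (φ a) (φ b) := by
        by_contra h
        exact hnadj ((Γ.compl_adj (φ a) (φ b)).mpr ⟨hφ, h⟩)
      exact φ.map_adj_iff.mp ⟨hΓ, Or.inl hc⟩
    have hsurj : Function.Surjective g := by
      intro i
      obtain ⟨a, _, ha⟩ := Finset.mem_image.mp (e.symm i).2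
      refine ⟨a, ?_⟩
      have hx : (⟨g0 a, hmem a⟩ : {x // x ∈ S}) = e.symm i := Subtype.ext ha
      rw [hg]
      simp only [hx, Equiv.apply_symm_apply]
    have hQuot : IsCliqueQuotient H Q := ⟨g, hsurj, hfib, fun i j => Iff.rfl⟩
    let f : Fin S.card → Fin k := fun i => (e.symm i : Fin k)
    have hfg : ∀ a, f (g a) = g0 a := by
      intro a
      simp only [f, hg, Equiv.symm_apply_apply]
    have hfinj : Function.Injective f := fun i j h => by
      have : e.symm i = e.symm j := Subtype.ext h
      exact e.symm.injective this
    have hhom : ∀ {i j}, Q.Adj i j → F.Adj (f i) (f j) := by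
      rintro i j ⟨hne, a, b, ha, hb, hab⟩
      have hadj : (Gs σ).Adj (φ a) (φ b) := φ.map_adj_iff.mpr hab
      rcases hadj.2 with hcc | hF
      · exact absurd (ha ▸ hb ▸ congrArg e (Subtype.ext (congrArg σ hcc)) : i = j) hne
      · rw [← ha, ← hb, hfg, hfg]
        exact hF
    have hQcol : Q.Colorable 2 := by
      obtain ⟨C2⟩ := hFbip
      exact ⟨Coloring.mk (fun i => C2 (f i)) (fun h => C2.valid (hhom h))⟩
    exact hFfree S.card Q hQuot hQcol ⟨⟨f, fun h => hhom h⟩, hfinj⟩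
  -- edge counting
  have hEdge : ∀ σ, (Gs σ).edgeFinset = Γ.edgeFinset.filter (fun e => e ∈ (Gs σ).edgeSet) := by
    intro σ
    ext e
    simp only [Finset.mem_filter, mem_edgeFinset]
    exact ⟨fun h => ⟨edgeSet_mono (hle σ) h, h⟩, fun h => h.2⟩
  -- per-edge count
  have hper : ∀ e ∈ Γ.edgeFinset,
      (#F.edgeFinset * k.factorial) ≤
        #(Finset.univ.filter fun σ : Equiv.Perm (Fin k) => e ∈ (Gs σ).edgeSet) * k.choose 2 := by
    intro e he
    induction e using Sym2.ind with
    | _ u v =>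
      have hΓ : Γ.Adj u v := mem_edgeFinset.mp he
      have hiff : ∀ σ : Equiv.Perm (Fin k),
          (s(u, v) ∈ (Gs σ).edgeSet) ↔ (c u = c v ∨ F.Adj (σ (c u)) (σ (c v))) := by
        intro σ
        rw [mem_edgeSet]
        exact ⟨fun h => h.2, fun h => ⟨hΓ, h⟩⟩
      by_cases hcc : c u = c v
      · have : (Finset.univ.filter fun σ : Equiv.Perm (Fin k) => s(u, v) ∈ (Gs σ).edgeSet)
            = Finset.univ := by
          refine Finset.filter_true_of_mem fun σ _ => ?_
          exact (hiff σ).mpr (Or.inl hcc)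
        rw [this, Finset.card_univ, Fintype.card_perm, Fintype.card_fin]
        have h1 : #F.edgeFinset ≤ k.choose 2 := by
          have := F.card_edgeFinset_le_card_choose_two
          rwa [Fintype.card_fin] at this
        calc #F.edgeFinset * k.factorial ≤ k.choose 2 * k.factorial :=
              Nat.mul_le_mul_right _ h1
          _ = k.factorial * k.choose 2 := Nat.mul_comm _ _
      · have hne : c u ≠ c v := hcc
        have : (Finset.univ.filter fun σ : Equiv.Perm (Fin k) => s(u, v) ∈ (Gs σ).edgeSet)
            = (Finset.univ.filter fun σ : Equiv.Perm (Fin k) => F.Adj (σ (c u)) (σ (c v))) := by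
          refine Finset.filter_congr fun σ _ => ?_
          rw [hiff σ]
          simp [hcc]
        rw [this, perm_count F hne]
        rw [Nat.mul_comm]
  -- total count
  have htot : #Γ.edgeFinset * #F.edgeFinset * k.factorial ≤
      (∑ σ : Equiv.Perm (Fin k), #(Gs σ).edgeFinset) * k.choose 2 := by
    have hswap : ∑ σ : Equiv.Perm (Fin k), #(Gs σ).edgeFinset
        = ∑ e ∈ Γ.edgeFinset,
            #(Finset.univ.filter fun σ : Equiv.Perm (Fin k) => e ∈ (Gs σ).edgeSet) := by
      calc ∑ σ : Equiv.Perm (Fin k), #(Gs σ).edgeFinset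
          = ∑ σ : Equiv.Perm (Fin k), ∑ e ∈ Γ.edgeFinset,
              ite (e ∈ (Gs σ).edgeSet) 1 0 := by
            refine Finset.sum_congr rfl fun σ _ => ?_
            rw [hEdge σ]
            exact Finset.card_filter _ _
        _ = ∑ e ∈ Γ.edgeFinset, ∑ σ : Equiv.Perm (Fin k),
              ite (e ∈ (Gs σ).edgeSet) 1 0 := Finset.sum_comm
        _ = _ := Finset.sum_congr rfl fun e _ => (Finset.card_filter _ _).symm
    rw [hswap, Finset.sum_mul]
    calc #Γ.edgeFinset * #F.edgeFinset * k.factorial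
        = ∑ _e ∈ Γ.edgeFinset, #F.edgeFinset * k.factorial := by
          rw [Finset.sum_const, smul_eq_mul, Nat.mul_assoc]
      _ ≤ _ := Finset.sum_le_sum hper
  -- pick a good σ
  obtain ⟨σ, _, hσ⟩ :
      ∃ σ ∈ (Finset.univ : Finset (Equiv.Perm (Fin k))),
        (#Γ.edgeFinset * #F.edgeFinset) ≤ #(Gs σ).edgeFinset * k.choose 2 := by
    refine Finset.exists_le_of_sum_le ⟨1, Finset.mem_univ 1⟩ ?_
    rw [Finset.sum_const, smul_eq_mul, Finset.card_univ, Fintype.card_perm, Fintype.card_fin]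
    calc k.factorial * (#Γ.edgeFinset * #F.edgeFinset)
        = #Γ.edgeFinset * #F.edgeFinset * k.factorial := by ring
      _ ≤ (∑ σ : Equiv.Perm (Fin k), #(Gs σ).edgeFinset) * k.choose 2 := htot
      _ = ∑ σ : Equiv.Perm (Fin k), #(Gs σ).edgeFinset * k.choose 2 := Finset.sum_mul _ _ _
  refine ⟨Gs σ, hle σ, ?_, hfree σ⟩
  rcases Nat.eq_zero_or_pos (k.choose 2) with h0 | hpos
  · rw [h0]
    simp
  · rw [div_le_iff₀ (by exact_mod_cast hpos)]
    norm_cast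
    exact hσ.trans (Nat.mul_le_mul_right _ (le_of_eq (edgeFinset_card_eq' (Gs σ) _ _)))
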